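/- Global bias-robustness of the Energy Score posterior: Assume the prior density π is bounded over Θ and the space X is bounded (so sup_{x,y∈X} ‖x − y‖₂ ≤ B < ∞). Then for any fixed dataset y_1,…,y_n and any β ∈ (0,2), the Energy Score posterior π_{S_E^β}(·|y_1,…,y_n) is globally bias-robust, i.e. sup_{θ∈Θ} sup_{z∈X} |PIF(z, θ, P̂_n)| < ∞. -/

import Mathlib

open MeasureTheory Filter Metric Set

private lemma deriv_zero_of_left_zero {f : ℝ → ℝ} (h : ∀ x < (0:ℝ), f x = 0) :
    deriv f 0 = 0 := by
  by_cases hd : DifferentiableAt ℝ f 0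
  · have hf0 : f 0 = 0 := by
      have h1 : Tendsto f (nhdsWithin (0:ℝ) (Set.Iio 0)) (nhds (f 0)) :=
        hd.continuousAt.continuousWithinAt
    -- f tends to 0 along the left filter
      have h2 : Tendsto f (nhdsWithin (0:ℝ) (Set.Iio 0)) (nhds 0) := by
        refine tendsto_const_nhds.congr' ?_
        filter_upwards [self_mem_nhdsWithin] with x hx
        exact (h x hx).symm
      exact tendsto_nhds_unique h1 h2
    have hs : Tendsto (slope f 0) (nhdsWithin (0:ℝ) {(0:ℝ)}ᶜ) (nhds (deriv f 0)) :=
      hasDerivAt_iff_tendsto_slope.mp hd.hasDerivAt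
    have hs' : Tendsto (slope f 0) (nhdsWithin (0:ℝ) (Set.Iio 0)) (nhds (deriv f 0)) :=
      hs.mono_left (nhdsWithin_mono 0 fun x hx => ne_of_lt hx)
    have hz : Tendsto (slope f 0) (nhdsWithin (0:ℝ) (Set.Iio 0)) (nhds 0) := by
      refine tendsto_const_nhds.congr' ?_
      filter_upwards [self_mem_nhdsWithin] with x hx
      simp [slope_def_field, h x hx, hf0]
    exact tendsto_nhds_unique hs' hz
  · exact deriv_zero_of_not_differentiableAt hd

private lemma deriv_zero_of_right_zero {f : ℝ → ℝ} (h : ∀ x > (0:ℝ), f x = 0) :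
    deriv f 0 = 0 := by
  by_cases hd : DifferentiableAt ℝ f 0
  · have hf0 : f 0 = 0 := by
      have h1 : Tendsto f (nhdsWithin (0:ℝ) (Set.Ioi 0)) (nhds (f 0)) :=
        hd.continuousAt.continuousWithinAt
      have h2 : Tendsto f (nhdsWithin (0:ℝ) (Set.Ioi 0)) (nhds 0) := by
        refine tendsto_const_nhds.congr' ?_
        filter_upwards [self_mem_nhdsWithin] with x hx
        exact (h x hx).symm
      exact tendsto_nhds_unique h1 h2
    have hs : Tendsto (slope f 0) (nhdsWithin (0:ℝ) {(0:ℝ)}ᶜ) (nhds (deriv f 0)) :=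
      hasDerivAt_iff_tendsto_slope.mp hd.hasDerivAt
    have hs' : Tendsto (slope f 0) (nhdsWithin (0:ℝ) (Set.Ioi 0)) (nhds (deriv f 0)) :=
      hs.mono_left (nhdsWithin_mono 0 fun x hx => ne_of_gt hx)
    have hz : Tendsto (slope f 0) (nhdsWithin (0:ℝ) (Set.Ioi 0)) (nhds 0) := by
      refine tendsto_const_nhds.congr' ?_
      filter_upwards [self_mem_nhdsWithin] with x hx
      simp [slope_def_field, h x hx, hf0]
    exact tendsto_nhds_unique hs' hz
  · exact deriv_zero_of_not_differentiableAt hd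

private lemma integrable_exp_comb {α : Type*} [MeasurableSpace α] {μ : Measure α}
    {A c : α → ℝ} (hA : ∀ x, 0 ≤ A x) {a b ε : ℝ} (hab : a < b) (hε : ε ∈ Set.Icc a b)
    (ha : Integrable (fun x => A x * Real.exp (c x * a)) μ)
    (hb : Integrable (fun x => A x * Real.exp (c x * b)) μ) :
    Integrable (fun x => A x * Real.exp (c x * ε)) μ := by
  have hba : (0:ℝ) < b - a := by linarith
  set t : ℝ := (b - ε) / (b - a) with ht
  have ht0 : 0 ≤ t := div_nonneg (by linarith [hε.2]) hba.le
  have ht1 : t ≤ 1 := by rw [ht, div_le_one hba]; linarith [hε.1]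
  have hts : t * a + (1 - t) * b = ε := by
    rw [ht]; field_simp; ring
  have key : ∀ x, A x * Real.exp (c x * ε)
      = (A x * Real.exp (c x * a)) ^ t * (A x * Real.exp (c x * b)) ^ (1 - t) := by
    intro x
    rcases eq_or_lt_of_le (hA x) with h0 | hpos
    · rcases eq_or_ne t 0 with ht' | ht'
      · rw [← h0]
        simp [ht', Real.zero_rpow (by norm_num : (1:ℝ) - 0 ≠ 0)]
      · rw [← h0]
        simp [Real.zero_rpow ht']
    · have hea : 0 < A x * Real.exp (c x * a) := mul_pos hpos (Real.exp_pos _)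
      have heb : 0 < A x * Real.exp (c x * b) := mul_pos hpos (Real.exp_pos _)
      rw [Real.rpow_def_of_pos hea, Real.rpow_def_of_pos heb, ← Real.exp_add,
        Real.log_mul hpos.ne' (Real.exp_pos _).ne', Real.log_exp,
        Real.log_mul hpos.ne' (Real.exp_pos _).ne', Real.log_exp,
        show A x * Real.exp (c x * ε) = Real.exp (Real.log (A x) + c x * ε) by
          rw [Real.exp_add, Real.exp_log hpos]]
      rw [← hts]
      ring
  have hsm : AEStronglyMeasurable (fun x => A x * Real.exp (c x * ε)) μ := by
    have h1 := ha.aestronglyMeasurable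
    have h2 := hb.aestronglyMeasurable
    have hmeas := ((Real.continuous_rpow_const (q := t) ht0).comp_aestronglyMeasurable h1).mul
      ((Real.continuous_rpow_const (q := 1 - t) (by linarith)).comp_aestronglyMeasurable h2)
    exact hmeas.congr (Eventually.of_forall fun x => (key x).symm)
  refine Integrable.mono' ((ha.const_mul t).add (hb.const_mul (1 - t))) hsm ?_
  refine Eventually.of_forall fun x => ?_
  rw [Real.norm_eq_abs, abs_of_nonneg (mul_nonneg (hA x) (Real.exp_pos _).le), key x]
  exact Real.geom_mean_le_arith_mean2_weighted ht0 (by linarith)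
    (mul_nonneg (hA x) (Real.exp_pos _).le) (mul_nonneg (hA x) (Real.exp_pos _).le) (by ring)

set_option maxHeartbeats 1000000 in
/-- Global bias-robustness of the Energy Score posterior (Theorem 3.2 of the paper).
The prior density is bounded over `Θ` and the data space `X` is bounded, with
`sup_{x,y∈X} ‖x - y‖₂ ≤ B < ∞`.  For a fixed dataset `y₁,…,y_n ∈ X` and any
`β ∈ (0,2)`, the contaminated loss is
`L(θ, P̂_{n,ε,z}) = (1-ε)·(1/n)∑ᵢ S_E^β(P_θ, yᵢ) + ε·S_E^β(P_θ, z)` and the posterior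
influence function `PIF(z, θ, P̂_n)` is the derivative at `ε = 0` of the posterior
density `π(θ) exp(-w n L(θ, P̂_{n,ε,z})) / ∫_Θ π(θ') exp(-w n L(θ', P̂_{n,ε,z})) dθ'`.
Conclusion: `sup_{θ∈Θ} sup_{z∈X} |PIF(z, θ, P̂_n)| < ∞`. -/
theorem energy_score_posterior_globally_bias_robust
    {d p : ℕ}
    (X : Set (EuclideanSpace ℝ (Fin d)))
    (Θ : Set (Fin p → ℝ)) (hΘ : MeasurableSet Θ)
    (P : (Fin p → ℝ) → Measure (EuclideanSpace ℝ (Fin d)))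
    [∀ θ, IsProbabilityMeasure (P θ)]
    (hP_supp : ∀ θ ∈ Θ, P θ X = 1)
    (B : ℝ) (hB : 0 ≤ B)
    (hX_bdd : ∀ x ∈ X, ∀ x' ∈ X, ‖x - x'‖ ≤ B)
    (β : ℝ) (hβ : β ∈ Set.Ioo (0 : ℝ) 2)
    (Se : (Fin p → ℝ) → EuclideanSpace ℝ (Fin d) → ℝ)
    (hSe : ∀ θ y', Se θ y' =
      2 * (∫ x, ‖x - y'‖ ^ β ∂(P θ)) - ∫ x, ∫ x', ‖x - x'‖ ^ β ∂(P θ) ∂(P θ))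
    (prior : (Fin p → ℝ) → ℝ) (hprior_meas : Measurable prior)
    (hprior_nonneg : ∀ θ, 0 ≤ prior θ)
    (hprior_bdd : ∃ Cπ : ℝ, ∀ θ ∈ Θ, prior θ ≤ Cπ)
    (w : ℝ) (hw : 0 < w)
    (n : ℕ) (hn : 0 < n)
    (y : Fin n → EuclideanSpace ℝ (Fin d)) (hy : ∀ i, y i ∈ X) :
    ∃ C : ℝ, ∀ θ ∈ Θ, ∀ z ∈ X,
      |deriv (fun ε : ℝ =>
          prior θ * Real.exp (-(w * n) *
              ((1 - ε) * ((n : ℝ)⁻¹ * ∑ i, Se θ (y i)) + ε * Se θ z)) /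
            ∫ θ' in Θ, prior θ' * Real.exp (-(w * n) *
              ((1 - ε) * ((n : ℝ)⁻¹ * ∑ i, Se θ' (y i)) + ε * Se θ' z))) 0| ≤ C := by
  obtain ⟨Cπ, hCπ⟩ := hprior_bdd
  have hβ0 : (0:ℝ) < β := hβ.1
  set Bb : ℝ := B ^ β with hBbdef
  have hBb : 0 ≤ Bb := Real.rpow_nonneg hB β
  -- distances are bounded by B on the closure of X
  have hclos1 : ∀ v ∈ X, ∀ x ∈ closure X, ‖x - v‖ ≤ B := by
    intro v hv x hx
    have hsub : X ⊆ {x | ‖x - v‖ ≤ B} := fun u hu => hX_bdd u hu v hv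
    have hcl : IsClosed {x : EuclideanSpace ℝ (Fin d) | ‖x - v‖ ≤ B} :=
      isClosed_le ((continuous_id.sub continuous_const).norm) continuous_const
    exact closure_minimal hsub hcl hx
  have hclos : ∀ x ∈ closure X, ∀ v ∈ closure X, ‖x - v‖ ≤ B := by
    intro x hx v hv
    have hsub : X ⊆ {v | ‖x - v‖ ≤ B} := fun u hu => hclos1 u hu x hx
    have hcl : IsClosed {v : EuclideanSpace ℝ (Fin d) | ‖x - v‖ ≤ B} :=
      isClosed_le ((continuous_const.sub continuous_id).norm) continuous_const
    exact closure_minimal hsub hcl hv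
  -- the measures live a.e. on the closure of X
  have hXc : ∀ θ ∈ Θ, ∀ᵐ x ∂(P θ), x ∈ closure X := by
    intro θ hθ
    have h1 : P θ (closure X) = 1 :=
      le_antisymm prob_le_one
        (le_trans (le_of_eq (hP_supp θ hθ).symm) (measure_mono subset_closure))
    have h2 : P θ (closure X)ᶜ = 0 := by
      rw [measure_compl isClosed_closure.measurableSet (measure_ne_top _ _), h1, measure_univ]
      simp
    exact ae_iff.2 h2
  -- bound on single integrals
  have hsingle : ∀ θ ∈ Θ, ∀ v ∈ closure X, |∫ x, ‖x - v‖ ^ β ∂(P θ)| ≤ Bb := by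
    intro θ hθ v hv
    have h := norm_integral_le_of_norm_le_const (μ := P θ)
      (f := fun x => ‖x - v‖ ^ β) (C := Bb) ?_
    · simpa [Real.norm_eq_abs, measure_univ] using h
    · filter_upwards [hXc θ hθ] with x hx
      rw [Real.norm_eq_abs, abs_of_nonneg (Real.rpow_nonneg (norm_nonneg _) _)]
      exact Real.rpow_le_rpow (norm_nonneg _) (hclos x hx v hv) hβ0.le
  -- bound on inner integrals of the double integral
  have hinner : ∀ θ ∈ Θ, ∀ x ∈ closure X, |∫ x', ‖x - x'‖ ^ β ∂(P θ)| ≤ Bb := by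
    intro θ hθ x hx
    have h := norm_integral_le_of_norm_le_const (μ := P θ)
      (f := fun x' => ‖x - x'‖ ^ β) (C := Bb) ?_
    · simpa [Real.norm_eq_abs, measure_univ] using h
    · filter_upwards [hXc θ hθ] with x' hx'
      rw [Real.norm_eq_abs, abs_of_nonneg (Real.rpow_nonneg (norm_nonneg _) _)]
      exact Real.rpow_le_rpow (norm_nonneg _) (hclos x hx x' hx') hβ0.le
  -- uniform bound on the energy score
  have hSebd : ∀ θ ∈ Θ, ∀ v ∈ X, |Se θ v| ≤ 2 * Bb := by
    intro θ hθ v hv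
    have hv' : v ∈ closure X := subset_closure hv
    have hIub : (∫ x, ‖x - v‖ ^ β ∂(P θ)) ≤ Bb := (abs_le.1 (hsingle θ hθ v hv')).2
    have hI0 : 0 ≤ ∫ x, ‖x - v‖ ^ β ∂(P θ) :=
      integral_nonneg fun x => Real.rpow_nonneg (norm_nonneg _) _
    have hJ0 : 0 ≤ ∫ x, ∫ x', ‖x - x'‖ ^ β ∂(P θ) ∂(P θ) :=
      integral_nonneg fun x => integral_nonneg fun x' => Real.rpow_nonneg (norm_nonneg _) _
    have hJub : (∫ x, ∫ x', ‖x - x'‖ ^ β ∂(P θ) ∂(P θ)) ≤ Bb := by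
      have h := norm_integral_le_of_norm_le_const (μ := P θ)
        (f := fun x => ∫ x', ‖x - x'‖ ^ β ∂(P θ)) (C := Bb) ?_
      · have := (abs_le.1 (by simpa [Real.norm_eq_abs, measure_univ] using h)).2
        exact this
      · filter_upwards [hXc θ hθ] with x hx
        rw [Real.norm_eq_abs]
        exact hinner θ hθ x hx
    rw [hSe θ v, abs_le]
    constructor <;> linarith
  -- notation: Sbar, A, c
  have hn' : (0:ℝ) < (n:ℝ) := by exact_mod_cast hn
  have hwn : (0:ℝ) < w * n := mul_pos hw hn'
  -- bound on the average score
  have hSbar : ∀ θ ∈ Θ, |(n:ℝ)⁻¹ * ∑ i, Se θ (y i)| ≤ 2 * Bb := by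
    intro θ hθ
    have hsum : |∑ i, Se θ (y i)| ≤ (n:ℝ) * (2 * Bb) := by
      calc |∑ i, Se θ (y i)| ≤ ∑ i, |Se θ (y i)| := Finset.abs_sum_le_sum_abs _ _
        _ ≤ ∑ _i : Fin n, (2 * Bb) :=
            Finset.sum_le_sum fun i _ => hSebd θ hθ (y i) (hy i)
        _ = (n:ℝ) * (2 * Bb) := by simp [Finset.sum_const, Finset.card_univ, mul_comm]
    rw [abs_mul, abs_inv, abs_of_pos hn']
    rw [inv_mul_le_iff₀ hn']
    calc |∑ i, Se θ (y i)| ≤ (n:ℝ) * (2 * Bb) := hsum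
      _ = (n:ℝ) * (2 * Bb) := rfl
  set A : (Fin p → ℝ) → ℝ :=
    fun t => prior t * Real.exp (-(w * n) * ((n:ℝ)⁻¹ * ∑ i, Se t (y i))) with hAdef
  set c : (Fin p → ℝ) → EuclideanSpace ℝ (Fin d) → ℝ :=
    fun t z => -(w * n) * (Se t z - (n:ℝ)⁻¹ * ∑ i, Se t (y i)) with hcdef
  have hA_nonneg : ∀ t, 0 ≤ A t := fun t =>
    mul_nonneg (hprior_nonneg t) (Real.exp_pos _).le
  set M : ℝ := w * n * (4 * Bb) with hMdef
  have hM0 : 0 ≤ M := by positivity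
  set CA : ℝ := max Cπ 0 * Real.exp (w * n * (2 * Bb)) with hCAdef
  have hCA0 : 0 ≤ CA := mul_nonneg (le_max_right _ _) (Real.exp_pos _).le
  have hc_bd : ∀ θ' ∈ Θ, ∀ z ∈ X, |c θ' z| ≤ M := by
    intro θ' hθ' z hz
    rw [hcdef, hMdef]
    simp only []
    rw [abs_mul, abs_neg, abs_of_pos hwn]
    have h1 : |Se θ' z - (n:ℝ)⁻¹ * ∑ i, Se θ' (y i)| ≤ 4 * Bb := by
      have := abs_sub (Se θ' z) ((n:ℝ)⁻¹ * ∑ i, Se θ' (y i))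
      have h2 := hSebd θ' hθ' z hz
      have h3 := hSbar θ' hθ'
      calc |Se θ' z - (n:ℝ)⁻¹ * ∑ i, Se θ' (y i)|
          ≤ |Se θ' z| + |(n:ℝ)⁻¹ * ∑ i, Se θ' (y i)| := by
            rw [sub_eq_add_neg]
            exact (abs_add_le _ _).trans (by rw [abs_neg])
        _ ≤ 4 * Bb := by linarith
    exact mul_le_mul_of_nonneg_left h1 hwn.le
  have hA_le : ∀ θ ∈ Θ, A θ ≤ CA := by
    intro θ hθ
    rw [hAdef, hCAdef]
    simp only []
    have h1 : prior θ ≤ max Cπ 0 := le_trans (hCπ θ hθ) (le_max_left _ _)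
    have h2 : Real.exp (-(w * n) * ((n:ℝ)⁻¹ * ∑ i, Se θ (y i))) ≤
        Real.exp (w * n * (2 * Bb)) := by
      apply Real.exp_le_exp.2
      have h3 := hSbar θ hθ
      have h4 : -(w * n) * ((n:ℝ)⁻¹ * ∑ i, Se θ (y i)) ≤
          |(w * n) * ((n:ℝ)⁻¹ * ∑ i, Se θ (y i))| := by
        rw [← abs_neg, neg_mul]
        exact le_abs_self _
      rw [abs_mul, abs_of_pos hwn] at h4
      calc -(w * n) * ((n:ℝ)⁻¹ * ∑ i, Se θ (y i))
          ≤ w * n * |(n:ℝ)⁻¹ * ∑ i, Se θ (y i)| := h4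
        _ ≤ w * n * (2 * Bb) := mul_le_mul_of_nonneg_left h3 hwn.le
    exact mul_le_mul h1 h2 (Real.exp_pos _).le (le_max_right _ _)
  -- pointwise rewriting of the posterior density
  have hpt : ∀ (zz : EuclideanSpace ℝ (Fin d)) (ε : ℝ) (t : Fin p → ℝ),
      prior t * Real.exp (-(w * n) *
        ((1 - ε) * ((n : ℝ)⁻¹ * ∑ i, Se t (y i)) + ε * Se t zz))
      = A t * Real.exp (c t zz * ε) := by
    intro zz ε t
    rw [hAdef, hcdef]
    simp only []
    rw [show -(w * ↑n) * ((1 - ε) * ((n:ℝ)⁻¹ * ∑ i, Se t (y i)) + ε * Se t zz)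
        = (-(w * ↑n) * ((n:ℝ)⁻¹ * ∑ i, Se t (y i)))
          + (-(w * ↑n) * (Se t zz - (n:ℝ)⁻¹ * ∑ i, Se t (y i))) * ε from by ring,
      Real.exp_add, ← mul_assoc]
  have hfun : ∀ (θ : Fin p → ℝ) (zz : EuclideanSpace ℝ (Fin d)),
      (fun ε : ℝ =>
        prior θ * Real.exp (-(w * n) *
            ((1 - ε) * ((n : ℝ)⁻¹ * ∑ i, Se θ (y i)) + ε * Se θ zz)) /
          ∫ θ' in Θ, prior θ' * Real.exp (-(w * n) *
            ((1 - ε) * ((n : ℝ)⁻¹ * ∑ i, Se θ' (y i)) + ε * Se θ' zz)))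
      = fun ε : ℝ => A θ * Real.exp (c θ zz * ε) /
          ∫ θ' in Θ, A θ' * Real.exp (c θ' zz * ε) := by
    intro θ zz
    funext ε
    rw [hpt zz ε θ]
    congr 1
    exact integral_congr_ae (Eventually.of_forall fun t => hpt zz ε t)
  -- pointwise derivative helper
  have hderiv_pt : ∀ (t : Fin p → ℝ) (zz : EuclideanSpace ℝ (Fin d)) (ε : ℝ),
      HasDerivAt (fun u : ℝ => A t * Real.exp (c t zz * u))
        (c t zz * (A t * Real.exp (c t zz * ε))) ε := by
    intro t zz ε
    have h1 : HasDerivAt (fun u : ℝ => c t zz * u) (c t zz) ε := by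
      simpa using (hasDerivAt_id ε).const_mul (c t zz)
    have h2 := (h1.exp).const_mul (A t)
    exact h2.congr_deriv (by ring)
  by_cases hD : Integrable A (volume.restrict Θ) ∧ 0 < ∫ θ' in Θ, A θ'
  · -- main case
    obtain ⟨hAint, hD0pos⟩ := hD
    refine ⟨2 * M * CA / ∫ θ' in Θ, A θ', ?_⟩
    have hCpos : 0 ≤ 2 * M * CA / ∫ θ' in Θ, A θ' :=
      div_nonneg (by positivity) hD0pos.le
    intro θ hθ z hz
    rw [hfun θ z]
    by_cases hstr :
        (∃ a < (0:ℝ), Integrable (fun θ' => A θ' * Real.exp (c θ' z * a)) (volume.restrict Θ)) ∧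
        (∃ b > (0:ℝ), Integrable (fun θ' => A θ' * Real.exp (c θ' z * b)) (volume.restrict Θ))
    · obtain ⟨⟨a, ha0, haI⟩, ⟨b, hb0, hbI⟩⟩ := hstr
      set r : ℝ := min (-a) b with hrdef
      have hrpos : 0 < r := lt_min (by linarith) hb0
      have hball : ∀ ε ∈ Metric.ball (0:ℝ) r, a ≤ ε ∧ ε ≤ b := by
        intro ε hε
        have h1 : |ε| < r := by rwa [mem_ball_zero_iff, Real.norm_eq_abs] at hε
        have h2 : r ≤ -a := min_le_left _ _
        have h3 : r ≤ b := min_le_right _ _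
        constructor
        · nlinarith [neg_abs_le ε]
        · nlinarith [le_abs_self ε]
      have hconv : ∀ ε ∈ Metric.ball (0:ℝ) r,
          Integrable (fun θ' => A θ' * Real.exp (c θ' z * ε)) (volume.restrict Θ) := by
        intro ε hε
        exact integrable_exp_comb hA_nonneg (by linarith)
          ⟨(hball ε hε).1, (hball ε hε).2⟩ haI hbI
      have h0ball : (0:ℝ) ∈ Metric.ball (0:ℝ) r := mem_ball_self hrpos
      -- measurability of the derivative integrand via approximation
      have hF'meas : AEStronglyMeasurable
          (fun θ' => c θ' z * (A θ' * Real.exp (c θ' z * 0))) (volume.restrict Θ) := by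
        set s : ℕ → ℝ := fun k => r / ((k:ℝ) + 2) with hsdef
        have hspos : ∀ k, 0 < s k := fun k => div_pos hrpos (by positivity)
        have hslt : ∀ k, s k < r := by
          intro k
          rw [hsdef]
          simp only []
          rw [div_lt_iff₀ (by positivity)]
          nlinarith [hrpos, Nat.cast_nonneg (α := ℝ) k]
        have hsball : ∀ k, s k ∈ Metric.ball (0:ℝ) r := by
          intro k
          rw [mem_ball_zero_iff, Real.norm_eq_abs, abs_of_pos (hspos k)]
          exact hslt k
        have hs0 : Tendsto s atTop (nhds 0) := by
          apply Tendsto.div_atTop (tendsto_const_nhds (x := r))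
          exact tendsto_atTop_add_const_right atTop 2 tendsto_natCast_atTop_atTop
        have hsne : Tendsto s atTop (nhdsWithin (0:ℝ) {(0:ℝ)}ᶜ) :=
          tendsto_nhdsWithin_of_tendsto_nhds_of_eventually_within s hs0
            (Eventually.of_forall fun k => (hspos k).ne')
        refine aestronglyMeasurable_of_tendsto_ae atTop
          (f := fun k θ' => (s k - 0)⁻¹ *
            (A θ' * Real.exp (c θ' z * s k) - A θ' * Real.exp (c θ' z * 0))) ?_ ?_
        · intro k
          exact (((hconv (s k) (hsball k)).sub
            (hconv 0 h0ball)).aestronglyMeasurable.const_mul _)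
        · refine Eventually.of_forall fun θ' => ?_
          have hd := hderiv_pt θ' z 0
          have ht := (hasDerivAt_iff_tendsto_slope.mp hd).comp hsne
          refine ht.congr fun k => ?_
          simp only [Function.comp_apply, slope_def_field]
          ring
      have hder := hasDerivAt_integral_of_dominated_loc_of_deriv_le
        (μ := volume.restrict Θ) (x₀ := (0:ℝ))
        (F := fun ε θ' => A θ' * Real.exp (c θ' z * ε))
        (F' := fun ε θ' => c θ' z * (A θ' * Real.exp (c θ' z * ε)))
        (bound := fun θ' => M * Real.exp (M * r) * A θ')
        (Metric.ball_mem_nhds (0:ℝ) hrpos) ?_ ?_ hF'meas ?_ ?_ ?_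
      · obtain ⟨-, hDder⟩ := hder
        have hN := hderiv_pt θ z 0
        have hval : (∫ θ' in Θ, A θ' * Real.exp (c θ' z * 0)) = ∫ θ' in Θ, A θ' := by
          simp
        have hdiv := hN.div hDder (by rw [hval]; exact hD0pos.ne')
        rw [(show HasDerivAt (fun ε : ℝ => A θ * Real.exp (c θ z * ε) /
            ∫ θ' in Θ, A θ' * Real.exp (c θ' z * ε)) _ 0 from hdiv).deriv]
        -- bound the derivative of the denominator
        have hD'bd : |∫ θ' in Θ, c θ' z * (A θ' * Real.exp (c θ' z * 0))|
            ≤ M * ∫ θ' in Θ, A θ' := by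
          have h := norm_integral_le_of_norm_le (μ := volume.restrict Θ)
            (f := fun θ' => c θ' z * (A θ' * Real.exp (c θ' z * 0)))
            (g := fun θ' => M * A θ') (hAint.const_mul M) ?_
          · rw [Real.norm_eq_abs] at h
            rwa [integral_const_mul] at h
          · filter_upwards [ae_restrict_mem hΘ] with θ' hθ'
            rw [Real.norm_eq_abs, mul_zero, Real.exp_zero, mul_one, abs_mul,
              abs_of_nonneg (hA_nonneg θ')]
            exact mul_le_mul_of_nonneg_right (hc_bd θ' hθ' z hz) (hA_nonneg θ')
        have hN0 : |A θ * Real.exp (c θ z * 0)| ≤ CA := by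
          rw [mul_zero, Real.exp_zero, mul_one, abs_of_nonneg (hA_nonneg θ)]
          exact hA_le θ hθ
        have hN' : |c θ z * (A θ * Real.exp (c θ z * 0))| ≤ M * CA := by
          rw [abs_mul]
          refine mul_le_mul (hc_bd θ hθ z hz) hN0 (abs_nonneg _) hM0
        set D0 : ℝ := ∫ θ' in Θ, A θ' with hD0def
        set D' : ℝ := ∫ θ' in Θ, c θ' z * (A θ' * Real.exp (c θ' z * 0)) with hD'def
        rw [hval]
        have hnum : |c θ z * (A θ * Real.exp (c θ z * 0)) * D0
            - A θ * Real.exp (c θ z * 0) * D'| ≤ 2 * M * CA * D0 := by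
          calc |c θ z * (A θ * Real.exp (c θ z * 0)) * D0
              - A θ * Real.exp (c θ z * 0) * D'|
              ≤ |c θ z * (A θ * Real.exp (c θ z * 0)) * D0|
                + |A θ * Real.exp (c θ z * 0) * D'| := by
                rw [sub_eq_add_neg]
                exact (abs_add_le _ _).trans (by rw [abs_neg])
            _ = |c θ z * (A θ * Real.exp (c θ z * 0))| * D0
                + |A θ * Real.exp (c θ z * 0)| * |D'| := by
                rw [abs_mul (c θ z * (A θ * Real.exp (c θ z * 0))) D0,
                  abs_mul (A θ * Real.exp (c θ z * 0)) D', abs_of_nonneg hD0pos.le]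
            _ ≤ (M * CA) * D0 + CA * (M * D0) := by
                refine add_le_add (mul_le_mul_of_nonneg_right hN' hD0pos.le) ?_
                exact mul_le_mul hN0 hD'bd (abs_nonneg _) hCA0
            _ = 2 * M * CA * D0 := by ring
        rw [abs_div, abs_pow, abs_of_nonneg hD0pos.le]
        rw [div_le_div_iff₀ (by positivity) hD0pos]
        nlinarith [hnum, hD0pos]
      · filter_upwards [Metric.ball_mem_nhds (0:ℝ) hrpos] with ε hε
        exact (hconv ε hε).aestronglyMeasurable
      · exact hconv 0 h0ball
      · filter_upwards [ae_restrict_mem hΘ] with θ' hθ'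
        intro ε hε
        have hcb := hc_bd θ' hθ' z hz
        have hexp : Real.exp (c θ' z * ε) ≤ Real.exp (M * r) := by
          apply Real.exp_le_exp.2
          calc c θ' z * ε ≤ |c θ' z * ε| := le_abs_self _
            _ = |c θ' z| * |ε| := abs_mul _ _
            _ ≤ M * r := by
                have h1 : |ε| ≤ r := by
                  rw [mem_ball_zero_iff, Real.norm_eq_abs] at hε
                  exact hε.le
                exact mul_le_mul hcb h1 (abs_nonneg _) hM0
        rw [Real.norm_eq_abs, abs_mul,
          abs_of_nonneg (mul_nonneg (hA_nonneg θ') (Real.exp_pos _).le)]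
        calc |c θ' z| * (A θ' * Real.exp (c θ' z * ε))
            ≤ M * (A θ' * Real.exp (M * r)) := by
              refine mul_le_mul hcb ?_ (mul_nonneg (hA_nonneg θ') (Real.exp_pos _).le) hM0
              exact mul_le_mul_of_nonneg_left hexp (hA_nonneg θ')
          _ = M * Real.exp (M * r) * A θ' := by ring
      · exact hAint.const_mul _
      · refine Eventually.of_forall fun θ' => ?_
        intro ε _
        exact hderiv_pt θ' z ε
    · -- no straddling: the denominator vanishes on one side of 0
      rw [not_and_or] at hstr
      rcases hstr with hL | hR
      · push_neg at hL
        have hvan : ∀ x < (0:ℝ), (fun ε : ℝ => A θ * Real.exp (c θ z * ε) /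
            ∫ θ' in Θ, A θ' * Real.exp (c θ' z * ε)) x = 0 := by
          intro x hx
          simp only [integral_undef (hL x hx), div_zero]
        rw [deriv_zero_of_left_zero hvan, abs_zero]
        exact hCpos
      · push_neg at hR
        have hvan : ∀ x > (0:ℝ), (fun ε : ℝ => A θ * Real.exp (c θ z * ε) /
            ∫ θ' in Θ, A θ' * Real.exp (c θ' z * ε)) x = 0 := by
          intro x hx
          simp only [integral_undef (hR x hx), div_zero]
        rw [deriv_zero_of_right_zero hvan, abs_zero]
        exact hCpos
  · -- degenerate case: the posterior is identically zero or undefined near 0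
    refine ⟨0, ?_⟩
    intro θ hθ z hz
    rw [hfun θ z]
    by_cases hAint : Integrable A (volume.restrict Θ)
    · have hnotpos : ¬ 0 < ∫ θ' in Θ, A θ' := fun hp => hD ⟨hAint, hp⟩
      have h0 : (∫ θ' in Θ, A θ') = 0 :=
        le_antisymm (not_lt.1 hnotpos) (integral_nonneg fun t => hA_nonneg t)
      have hae : A =ᵐ[volume.restrict Θ] 0 :=
        (integral_eq_zero_iff_of_nonneg (fun t => hA_nonneg t) hAint).1 h0
      have hzero : ∀ ε : ℝ, (∫ θ' in Θ, A θ' * Real.exp (c θ' z * ε)) = 0 := by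
        intro ε
        have : (fun θ' => A θ' * Real.exp (c θ' z * ε)) =ᵐ[volume.restrict Θ]
            (fun _ => (0:ℝ)) := by
          filter_upwards [hae] with t ht
          simp only [Pi.zero_apply] at ht
          rw [ht, zero_mul]
        rw [integral_congr_ae this, integral_zero]
      have hfzero : (fun ε : ℝ => A θ * Real.exp (c θ z * ε) /
          ∫ θ' in Θ, A θ' * Real.exp (c θ' z * ε)) = fun _ => (0:ℝ) := by
        funext ε
        rw [hzero ε, div_zero]
      rw [hfzero, deriv_const]
      simp
    · by_cases hL : ∃ a < (0:ℝ),
          Integrable (fun θ' => A θ' * Real.exp (c θ' z * a)) (volume.restrict Θ)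
      · by_cases hRR : ∃ b > (0:ℝ),
            Integrable (fun θ' => A θ' * Real.exp (c θ' z * b)) (volume.restrict Θ)
        · exfalso
          obtain ⟨a, ha0, haI⟩ := hL
          obtain ⟨b, hb0, hbI⟩ := hRR
          have h0I := integrable_exp_comb hA_nonneg (show a < b by linarith)
            ⟨ha0.le, hb0.le⟩ haI hbI
          exact hAint (h0I.congr (Eventually.of_forall fun t => by
            simp only [mul_zero, Real.exp_zero, mul_one]))
        · push_neg at hRR
          have hvan : ∀ x > (0:ℝ), (fun ε : ℝ => A θ * Real.exp (c θ z * ε) /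
              ∫ θ' in Θ, A θ' * Real.exp (c θ' z * ε)) x = 0 := by
            intro x hx
            simp only [integral_undef (hRR x hx), div_zero]
          rw [deriv_zero_of_right_zero hvan, abs_zero]
      · push_neg at hL
        have hvan : ∀ x < (0:ℝ), (fun ε : ℝ => A θ * Real.exp (c θ z * ε) /
            ∫ θ' in Θ, A θ' * Real.exp (c θ' z * ε)) x = 0 := by
          intro x hx
          simp only [integral_undef (hL x hx), div_zero]
        rw [deriv_zero_of_left_zero hvan, abs_zero]
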